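/- Let L₁,…,L_d be fixed finite nonempty subsets of {1,…,k}, and let S = {i : |L_i| ≤ t} for a fixed integer t ≥ 1 and B = {1,…,d} \ S. Fix elements x_i ∈ L_i for i ∈ S, and for i ∈ B choose σ(i) ∈ L_i independently and uniformly at random. Let L = {1,…,k} \ ({x_i : i ∈ S} ∪ {σ(i) : i ∈ B}). Then the expected size of L is at least (k - |S|)·exp(-(1+1/t)·d/(k - |S|)), provided |S| < k. -/

import Mathlib

open Finset

lemma count_pi {d : ℕ} (L : Fin d → Finset ℕ) (P : Fin d → ℕ → Prop)
    [∀ i, DecidablePred (P i)] :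
    ((Finset.univ.filter (fun σ : ∀ i : Fin d, {n // n ∈ L i} => ∀ i, P i (σ i : ℕ))).card)
      = ∏ i, ((L i).filter (P i)).card := by
  rw [← Fintype.card_subtype]
  rw [Fintype.card_congr (Equiv.subtypePiEquivPi (p := fun i (b : {n // n ∈ L i}) => P i ↑b))]
  rw [Fintype.card_pi]
  congr 1
  ext i
  rw [Fintype.card_subtype, Finset.univ_eq_attach, Finset.filter_attach, Finset.card_map,
    Finset.card_attach]

-- key per-factor inequality
lemma factor_ineq (t : ℕ) (ht : 1 ≤ t) (m : ℕ) (hm : t < m) :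
    (m : ℝ) * Real.exp (-(1 + 1/(t:ℝ)) * (1/(m:ℝ))) ≤ (m : ℝ) - 1 := by
  have ht' : (1:ℝ) ≤ t := by exact_mod_cast ht
  have hm' : (t:ℝ) + 1 ≤ m := by exact_mod_cast hm
  have hmpos : (0:ℝ) < m := by linarith
  set u : ℝ := (1 + 1/(t:ℝ)) * (1/(m:ℝ)) with hu
  have hupos : 0 < u := by positivity
  have hexp : 1 + u ≤ Real.exp u := by linarith [Real.add_one_le_exp u]
  have h1 : Real.exp (-u) = (Real.exp u)⁻¹ := Real.exp_neg u
  have hEpos : 0 < Real.exp u := Real.exp_pos u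
  rw [show -(1 + 1/(t:ℝ)) * (1/(m:ℝ)) = -u by rw [hu]; ring, h1]
  have key : (m:ℝ) ≤ ((m:ℝ) - 1) * (1 + u) := by
    have htpos : (0:ℝ) < t := by linarith
    rw [hu]
    have expand : ((m:ℝ) - 1) * (1 + (1 + 1/(t:ℝ)) * (1/(m:ℝ)))
        = (m:ℝ) - 1 + ((m:ℝ)-1)*((t:ℝ)+1)/((t:ℝ)*(m:ℝ)) := by
      field_simp
    rw [expand, ← sub_le_iff_le_add', le_div_iff₀ (by positivity)]
    nlinarith
  have h2 : (m:ℝ) * (Real.exp u)⁻¹ ≤ ((m:ℝ) - 1) * (1+u) * (Real.exp u)⁻¹ := by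
    apply mul_le_mul_of_nonneg_right key (by positivity)
  calc (m:ℝ) * (Real.exp u)⁻¹ ≤ ((m:ℝ) - 1) * (1+u) * (Real.exp u)⁻¹ := h2
    _ ≤ ((m:ℝ) - 1) * Real.exp u * (Real.exp u)⁻¹ := by
        apply mul_le_mul_of_nonneg_right _ (by positivity)
        apply mul_le_mul_of_nonneg_left hexp
        nlinarith
    _ = (m:ℝ) - 1 := by field_simp

theorem stmt_3 (d k t : ℕ) (ht : 1 ≤ t) (L : Fin d → Finset ℕ)
    (hne : ∀ i, (L i).Nonempty) (hsub : ∀ i, L i ⊆ Finset.Icc 1 k)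
    (x : Fin d → ℕ) (hx : ∀ i, x i ∈ L i)
    (S : Finset (Fin d)) (hS : S = Finset.univ.filter (fun i : Fin d => (L i).card ≤ t))
    (hSk : S.card < k)
    (Ω : Finset (∀ i : Fin d, {n // n ∈ L i}))
    (hΩ : Ω = Finset.univ.filter (fun σ : ∀ i : Fin d, {n // n ∈ L i} =>
      ∀ i ∈ S, (σ i : ℕ) = x i)) :
    ((k : ℝ) - S.card) * Real.exp (-(1 + 1 / (t : ℝ)) * d / ((k : ℝ) - S.card)) ≤
      (∑ σ ∈ Ω,
        (((Finset.Icc 1 k).filter (fun c => ∀ i, (σ i : ℕ) ≠ c)).card : ℝ)) / Ω.card := by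
  classical
  have htr : (1:ℝ) ≤ t := by exact_mod_cast ht
  have htpos : (0:ℝ) < t := by linarith
  set P : Fin d → ℕ → Prop := fun i n => i ∈ S → n = x i with hP
  set Pc : ℕ → Fin d → ℕ → Prop := fun c i n => (i ∈ S → n = x i) ∧ n ≠ c with hPc
  -- cardinality of Ω
  have hΩcard : Ω.card = ∏ i, ((L i).filter (P i)).card := by
    rw [hΩ]; exact count_pi L P
  have hΩpos : 0 < Ω.card := by
    rw [hΩ]
    apply Finset.card_pos.2
    exact ⟨fun i => ⟨x i, hx i⟩, by simp⟩
  have hΩposR : (0:ℝ) < Ω.card := by exact_mod_cast hΩpos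
  -- cardinality of the avoiding sets
  have hAcard : ∀ c : ℕ, ((Ω.filter (fun σ => ∀ i, (σ i : ℕ) ≠ c)).card)
      = ∏ i, ((L i).filter (Pc c i)).card := by
    intro c
    have he : Ω.filter (fun σ => ∀ i, (σ i : ℕ) ≠ c)
        = Finset.univ.filter (fun σ : ∀ i : Fin d, {n // n ∈ L i} => ∀ i, Pc c i (σ i : ℕ)) := by
      rw [hΩ, Finset.filter_filter]
      apply Finset.filter_congr
      intro σ _
      simp only [hPc]
      constructor
      · rintro ⟨h1, h2⟩ i; exact ⟨h1 i, h2 i⟩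
      · intro h; exact ⟨fun i hi => (h i).1 hi, fun i => (h i).2⟩
    rw [he]; exact count_pi L (Pc c)
  -- swap the sums
  have hswap : (∑ σ ∈ Ω, (((Finset.Icc 1 k).filter (fun c => ∀ i, (σ i : ℕ) ≠ c)).card : ℝ))
      = ∑ c ∈ Finset.Icc 1 k, ((Ω.filter (fun σ => ∀ i, (σ i : ℕ) ≠ c)).card : ℝ) := by
    simp only [Finset.card_filter]
    push_cast
    rw [Finset.sum_comm]
  -- good colours
  set G : Finset ℕ := (Finset.Icc 1 k).filter (fun c => ∀ i ∈ S, x i ≠ c) with hG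
  have hGcard : k ≤ G.card + S.card := by
    have hsub2 : Finset.Icc 1 k ⊆ G ∪ S.image x := by
      intro c hc
      by_cases h : ∀ i ∈ S, x i ≠ c
      · exact Finset.mem_union_left _ (Finset.mem_filter.2 ⟨hc, h⟩)
      · push_neg at h
        obtain ⟨i, hi, hxi⟩ := h
        exact Finset.mem_union_right _ (Finset.mem_image.2 ⟨i, hi, hxi⟩)
    calc k = (Finset.Icc 1 k).card := by rw [Nat.card_Icc]; omega
      _ ≤ (G ∪ S.image x).card := Finset.card_le_card hsub2
      _ ≤ G.card + (S.image x).card := Finset.card_union_le _ _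
      _ ≤ G.card + S.card := by gcongr; exact Finset.card_image_le
  obtain ⟨G₀, hG₀G, hG₀card⟩ := Finset.exists_subset_card_eq (s := G) (n := k - S.card) (by omega)
  set N : ℕ := k - S.card with hN
  have hNpos : 0 < N := by omega
  have hNr : (N:ℝ) = (k:ℝ) - S.card := by
    rw [hN]; push_cast [Nat.cast_sub (le_of_lt hSk)]; ring
  have hNposR : (0:ℝ) < N := by exact_mod_cast hNpos
  -- the weights
  set w : Fin d → ℕ → ℝ :=
    fun i c => if i ∈ S then 0 else (if c ∈ L i then ((L i).card : ℝ)⁻¹ else 0) with hw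
  have hwnonneg : ∀ i c, 0 ≤ w i c := by
    intro i c; rw [hw]; dsimp only; split <;> [norm_num; skip]; split <;> positivity
  set b : ℕ → ℝ := fun c => -(1 + 1/(t:ℝ)) * ∑ i, w i c with hb
  -- pointwise bound
  have hpoint : ∀ c ∈ G₀, (Ω.card : ℝ) * Real.exp (b c)
      ≤ ((Ω.filter (fun σ => ∀ i, (σ i : ℕ) ≠ c)).card : ℝ) := by
    intro c hc
    have hcG : c ∈ G := hG₀G hc
    have hxc : ∀ i ∈ S, x i ≠ c := (Finset.mem_filter.1 hcG).2
    rw [hAcard c, hΩcard, hb]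
    push_cast
    rw [Finset.mul_sum, Real.exp_sum, ← Finset.prod_mul_distrib]
    apply Finset.prod_le_prod
    · intro i _; positivity
    · intro i _
      by_cases hiS : i ∈ S
      · have h1 : (L i).filter (P i) = {x i} := by
          ext n
          simp only [hP, Finset.mem_filter, Finset.mem_singleton]
          exact ⟨fun ⟨_, h⟩ => h hiS, fun h => ⟨h ▸ hx i, fun _ => h⟩⟩
        have h2 : (L i).filter (Pc c i) = {x i} := by
          ext n
          simp only [hPc, Finset.mem_filter, Finset.mem_singleton]
          exact ⟨fun ⟨_, h, _⟩ => h hiS, fun h => ⟨h ▸ hx i, fun _ => h, h ▸ hxc i hiS⟩⟩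
        rw [h1, h2]
        have hw0 : w i c = 0 := by rw [hw]; simp [hiS]
        simp [hw0]
      · have hcardt : t < (L i).card := by
          by_contra h
          exact hiS (hS ▸ Finset.mem_filter.2 ⟨Finset.mem_univ i, by omega⟩)
        have h1 : (L i).filter (P i) = L i := by
          apply Finset.filter_true_of_mem; intro n _; exact fun h => absurd h hiS
        have h2 : (L i).filter (Pc c i) = (L i).filter (fun n => n ≠ c) := by
          apply Finset.filter_congr; intro n _
          simp only [hPc]
          exact ⟨fun ⟨_, h⟩ => h, fun h => ⟨fun hi => absurd hi hiS, h⟩⟩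
        rw [h1, h2]
        by_cases hcL : c ∈ L i
        · have h3 : (L i).filter (fun n => n ≠ c) = (L i).erase c := by
            ext n; simp [Finset.mem_erase, and_comm]
          rw [h3, Finset.card_erase_of_mem hcL]
          have hwv : w i c = ((L i).card : ℝ)⁻¹ := by rw [hw]; simp [hiS, hcL]
          rw [hwv]
          have hcard1 : 1 ≤ (L i).card := Finset.card_pos.2 (hne i)
          have := factor_ineq t ht (L i).card hcardt
          push_cast [Nat.cast_sub hcard1]
          rw [inv_eq_one_div]
          convert this using 3 <;> ring_nf
        · have h3 : (L i).filter (fun n => n ≠ c) = L i := by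
            apply Finset.filter_true_of_mem; intro n hn; exact fun h => hcL (h ▸ hn)
          rw [h3]
          have hwv : w i c = 0 := by rw [hw]; simp [hiS, hcL]
          simp [hwv]
  -- sum of weights bound
  have hsumw : ∑ c ∈ G₀, (∑ i, w i c) ≤ (d:ℝ) := by
    rw [Finset.sum_comm]
    calc ∑ i : Fin d, ∑ c ∈ G₀, w i c ≤ ∑ i : Fin d, (1:ℝ) := by
          apply Finset.sum_le_sum
          intro i _
          by_cases hiS : i ∈ S
          · simp only [hw, if_pos hiS]
            simp
          · simp only [hw, if_neg hiS]
            rw [Finset.sum_ite_mem, Finset.sum_const, nsmul_eq_mul]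
            have hLpos : (0:ℝ) < (L i).card := by
              have := Finset.card_pos.2 (hne i); exact_mod_cast this
            rw [inv_eq_one_div, mul_one_div, div_le_one hLpos]
            exact_mod_cast Finset.card_le_card (Finset.inter_subset_right)
      _ = d := by simp
  -- Jensen's inequality
  have hG₀N : G₀.card = N := hG₀card
  have hJ : Real.exp ((∑ c ∈ G₀, b c) / N) ≤ (∑ c ∈ G₀, Real.exp (b c)) / N := by
    have h1 := convexOn_exp.map_sum_le (t := G₀) (w := fun _ => (N:ℝ)⁻¹) (p := b)
      (fun _ _ => by positivity)
      (by rw [Finset.sum_const, hG₀N, nsmul_eq_mul]; field_simp)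
      (fun _ _ => Set.mem_univ _)
    have e1 : ∑ c ∈ G₀, (N:ℝ)⁻¹ • b c = (∑ c ∈ G₀, b c) / N := by
      rw [Finset.sum_div]; simp [smul_eq_mul, inv_mul_eq_div]
    have e2 : ∑ c ∈ G₀, (N:ℝ)⁻¹ • Real.exp (b c) = (∑ c ∈ G₀, Real.exp (b c)) / N := by
      rw [Finset.sum_div]; simp [smul_eq_mul, inv_mul_eq_div]
    rw [e1, e2] at h1; exact h1
  -- final assembly
  rw [hswap, le_div_iff₀ hΩposR]
  have hG₀Icc : G₀ ⊆ Finset.Icc 1 k := hG₀G.trans (Finset.filter_subset _ _)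
  have hbsum : -(1 + 1/(t:ℝ)) * d ≤ ∑ c ∈ G₀, b c := by
    rw [hb]
    dsimp only
    rw [← Finset.mul_sum]
    have h1t : (0:ℝ) ≤ 1 + 1/t := by positivity
    nlinarith [hsumw]
  calc ((k:ℝ) - S.card) * Real.exp (-(1 + 1/(t:ℝ)) * d / ((k:ℝ) - S.card)) * Ω.card
      = (Ω.card : ℝ) * ((N:ℝ) * Real.exp (-(1 + 1/(t:ℝ)) * d / (N:ℝ))) := by
        rw [hNr]; ring
    _ ≤ (Ω.card : ℝ) * ((N:ℝ) * Real.exp ((∑ c ∈ G₀, b c) / (N:ℝ))) := by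
        gcongr
    _ ≤ (Ω.card : ℝ) * ∑ c ∈ G₀, Real.exp (b c) := by
        have h2 : (N:ℝ) * Real.exp ((∑ c ∈ G₀, b c)/N) ≤ ∑ c ∈ G₀, Real.exp (b c) := by
          rw [mul_comm, ← le_div_iff₀ hNposR]; exact hJ
        exact mul_le_mul_of_nonneg_left h2 hΩposR.le
    _ = ∑ c ∈ G₀, (Ω.card : ℝ) * Real.exp (b c) := Finset.mul_sum _ _ _
    _ ≤ ∑ c ∈ G₀, ((Ω.filter (fun σ => ∀ i, (σ i : ℕ) ≠ c)).card : ℝ) :=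
        Finset.sum_le_sum hpoint
    _ ≤ ∑ c ∈ Finset.Icc 1 k, ((Ω.filter (fun σ => ∀ i, (σ i : ℕ) ≠ c)).card : ℝ) :=
        Finset.sum_le_sum_of_subset_of_nonneg hG₀Icc (fun c _ _ => by positivity)
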